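/- An assignment a_0,...,a_{2^h−1} ∈ {0,1} to the variables of the balancing formula of height h is accepted (root does not evaluate to F) if and only if for every 0 < k ≤ h and every 0 ≤ i < 2^{h−k}, the number of 1-values among a_{i·2^k},...,a_{(i+1)·2^k−1} is either 0, 2^k, or 2^{k−1}. -/

import Mathlib

/-- The 4-letter alphabet `Σ = {0, 1, P, F}` of the balancing formula. -/
inductive Sig4 where
  | zero | one | P | F
deriving DecidableEq

/-- The balancing gate. -/
def bgate : Sig4 → Sig4 → Sig4
  | .zero, .zero => .zero
  | .one, .one => .one
  | .one, .zero => .P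
  | .zero, .one => .P
  | .P, .P => .P
  | _, _ => .F

/-- The value computed at the root of the balancing formula of height `h`
on the Boolean input `a` (read at positions `0, …, 2^h - 1`). -/
def balEval : ℕ → (ℕ → Bool) → Sig4
  | 0, a => if a 0 then .one else .zero
  | h + 1, a => bgate (balEval h a) (balEval h (fun i => a (i + 2 ^ h)))

/-- The number of `1`-values among the first `m` positions of `a`. -/
def ones (m : ℕ) (a : ℕ → Bool) : ℕ :=
  ((Finset.range m).filter (fun j => a j = true)).card

def Bal (h : ℕ) (a : ℕ → Bool) : Prop :=
  ∀ k, 0 < k → k ≤ h → ∀ i, i < 2 ^ (h - k) →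
      ones (2 ^ k) (fun j => a (i * 2 ^ k + j)) = 0 ∨
      ones (2 ^ k) (fun j => a (i * 2 ^ k + j)) = 2 ^ k ∨
      ones (2 ^ k) (fun j => a (i * 2 ^ k + j)) = 2 ^ (k - 1)

lemma ones_eq_sum (m : ℕ) (a : ℕ → Bool) :
    ones m a = ∑ j ∈ Finset.range m, (if a j then 1 else 0) := by
  rw [ones, Finset.card_filter]

lemma ones_add (m n : ℕ) (a : ℕ → Bool) :
    ones (m + n) a = ones m a + ones n (fun j => a (m + j)) := by
  rw [ones_eq_sum, ones_eq_sum, ones_eq_sum, Finset.sum_range_add]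

lemma ones_total (h : ℕ) (a : ℕ → Bool) :
    ones (2 ^ (h + 1)) a = ones (2 ^ h) a + ones (2 ^ h) (fun i => a (i + 2 ^ h)) := by
  have : (fun j => a (2 ^ h + j)) = fun i => a (i + 2 ^ h) := by
    funext j; rw [Nat.add_comm]
  rw [pow_succ, mul_two, ones_add, this]

lemma main (h : ℕ) : ∀ a : ℕ → Bool,
    (balEval h a = .zero → ones (2 ^ h) a = 0) ∧
    (balEval h a = .one → ones (2 ^ h) a = 2 ^ h) ∧
    (balEval h a = .P → 0 < h ∧ ones (2 ^ h) a = 2 ^ (h - 1)) ∧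
    (balEval h a ≠ .F ↔ Bal h a) := by
  induction h with
  | zero =>
    intro a
    refine ⟨?_, ?_, ?_, ?_⟩
    · intro hz; cases ha : a 0 <;> simp [balEval, ha] at hz <;>
        simp [ones, Finset.range_one, Finset.filter_singleton, ha]
    · intro hz; cases ha : a 0 <;> simp [balEval, ha] at hz <;>
        simp [ones, Finset.range_one, Finset.filter_singleton, ha]
    · intro hz; cases ha : a 0 <;> simp [balEval, ha] at hz
    · constructor
      · intro _ k hk hk0; omega
      · intro _; cases ha : a 0 <;> simp [balEval, ha]
  | succ h ih =>
    intro a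
    set a' : ℕ → Bool := fun i => a (i + 2 ^ h) with ha'
    obtain ⟨L0, L1, LP, LF⟩ := ih a
    obtain ⟨R0, R1, RP, RF⟩ := ih a'
    have hev : balEval (h + 1) a = bgate (balEval h a) (balEval h a') := rfl
    have htot := ones_total h a
    -- block decomposition of Bal (h+1)
    have hblockL : ∀ k, k ≤ h → ∀ i,
        (fun j => a (i * 2 ^ k + j)) = (fun j => a (i * 2 ^ k + j)) := fun _ _ _ => rfl
    have key : Bal (h + 1) a ↔
        (Bal h a ∧ Bal h a' ∧
          (ones (2 ^ (h + 1)) a = 0 ∨ ones (2 ^ (h + 1)) a = 2 ^ (h + 1) ∨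
           ones (2 ^ (h + 1)) a = 2 ^ h)) := by
      constructor
      · intro hb
        refine ⟨?_, ?_, ?_⟩
        · intro k hk hkh i hi
          have := hb k hk (by omega) i (by
            have : h + 1 - k = (h - k) + 1 := by omega
            rw [this, pow_succ]; omega)
          exact this
        · intro k hk hkh i hi
          have hi' : 2 ^ (h - k) + i < 2 ^ (h + 1 - k) := by
            have : h + 1 - k = (h - k) + 1 := by omega
            rw [this, pow_succ]; omega
          have hbb := hb k hk (by omega) (2 ^ (h - k) + i) hi'
          have hfe : (fun j => a ((2 ^ (h - k) + i) * 2 ^ k + j)) =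
              (fun j => a' (i * 2 ^ k + j)) := by
            funext j
            have h2 : 2 ^ (h - k) * 2 ^ k = 2 ^ h := by
              rw [← pow_add]; congr 1; omega
            simp only [ha']
            congr 1
            rw [add_mul, h2]; ring
          rw [hfe] at hbb
          exact hbb
        · have := hb (h + 1) (by omega) le_rfl 0 (by simp)
          simpa using this
      · rintro ⟨h1, h2, h3⟩ k hk hkh i hi
        rcases Nat.lt_or_ge k (h + 1) with hkh' | hkh'
        · have hkh2 : k ≤ h := by omega
          have hsplit : h + 1 - k = (h - k) + 1 := by omega
          rw [hsplit, pow_succ] at hi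
          rcases Nat.lt_or_ge i (2 ^ (h - k)) with hlt | hge
          · exact h1 k hk hkh2 i hlt
          · set i' := i - 2 ^ (h - k) with hi'
            have hieq : i = 2 ^ (h - k) + i' := by omega
            have hfe : (fun j => a (i * 2 ^ k + j)) =
                (fun j => a' (i' * 2 ^ k + j)) := by
              funext j
              have h2 : 2 ^ (h - k) * 2 ^ k = 2 ^ h := by
                rw [← pow_add]; congr 1; omega
              simp only [ha']
              congr 1
              rw [hieq, add_mul, h2]; ring
            rw [hfe]
            exact h2 k hk hkh2 i' (by omega)
        · have hk1 : k = h + 1 := by omega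
          subst hk1
          have hi0 : i = 0 := by simpa using hi
          subst hi0
          simpa using h3
    refine ⟨?_, ?_, ?_, ?_⟩
    · intro hz
      rw [hev] at hz
      cases hL : balEval h a <;> cases hR : balEval h a' <;>
        rw [hL, hR] at hz <;> simp [bgate] at hz
      rw [htot, L0 hL, R0 hR]
    · intro hz
      rw [hev] at hz
      cases hL : balEval h a <;> cases hR : balEval h a' <;>
        rw [hL, hR] at hz <;> simp [bgate] at hz
      rw [htot, L1 hL, R1 hR, pow_succ]; ring
    · intro hz
      refine ⟨by omega, ?_⟩
      rw [hev] at hz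
      cases hL : balEval h a <;> cases hR : balEval h a' <;>
        rw [hL, hR] at hz <;> simp [bgate] at hz
      · rw [htot, L0 hL, R1 hR]; simp
      · rw [htot, L1 hL, R0 hR]; simp
      · obtain ⟨hp, hl⟩ := LP hL
        obtain ⟨_, hr⟩ := RP hR
        rw [htot, hl, hr]
        have : 2 ^ (h - 1) + 2 ^ (h - 1) = 2 ^ h := by
          rw [← two_mul, ← pow_succ']
          congr 1; omega
        simpa using this
    · rw [key, hev]
      constructor
      · intro hF
        cases hL : balEval h a <;> cases hR : balEval h a' <;>
          rw [hL, hR] at hF <;> simp [bgate] at hF <;>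
          refine ⟨LF.mp (by simp [hL]), RF.mp (by simp [hR]), ?_⟩
        · left; rw [htot, L0 hL, R0 hR]
        · right; right; rw [htot, L0 hL, R1 hR]; simp
        · right; right; rw [htot, L1 hL, R0 hR]; simp
        · right; left; rw [htot, L1 hL, R1 hR, pow_succ]; ring
        · right; right
          obtain ⟨hp, hl⟩ := LP hL
          obtain ⟨_, hr⟩ := RP hR
          rw [htot, hl, hr, ← two_mul, ← pow_succ']
          congr 1; omega
      · rintro ⟨h1, h2, h3⟩
        have hLF : balEval h a ≠ .F := LF.mpr h1
        have hRF : balEval h a' ≠ .F := RF.mpr h2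
        cases hL : balEval h a <;> cases hR : balEval h a' <;>
          simp [bgate] <;> rw [hL] at hLF <;> rw [hR] at hRF <;>
          try simp at hLF hRF
        -- remaining: mismatched P cases
        · -- zero, P
          obtain ⟨hp, hr⟩ := RP hR
          rw [htot, L0 hL, hr] at h3
          exfalso
          have eA : 2 ^ h = 2 * 2 ^ (h - 1) := by
            rw [← pow_succ']; congr 1; omega
          have eB : 2 ^ (h + 1) = 2 * 2 ^ h := by rw [pow_succ]; ring
          have e0 : 0 < 2 ^ (h - 1) := Nat.pow_pos (by omega)
          omega
        · -- one, P
          obtain ⟨hp, hr⟩ := RP hR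
          rw [htot, L1 hL, hr] at h3
          exfalso
          have eA : 2 ^ h = 2 * 2 ^ (h - 1) := by
            rw [← pow_succ']; congr 1; omega
          have eB : 2 ^ (h + 1) = 2 * 2 ^ h := by rw [pow_succ]; ring
          have e0 : 0 < 2 ^ (h - 1) := Nat.pow_pos (by omega)
          omega
        · -- P, zero
          obtain ⟨hp, hl⟩ := LP hL
          rw [htot, hl, R0 hR] at h3
          exfalso
          have eA : 2 ^ h = 2 * 2 ^ (h - 1) := by
            rw [← pow_succ']; congr 1; omega
          have eB : 2 ^ (h + 1) = 2 * 2 ^ h := by rw [pow_succ]; ring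
          have e0 : 0 < 2 ^ (h - 1) := Nat.pow_pos (by omega)
          omega
        · -- P, one
          obtain ⟨hp, hl⟩ := LP hL
          rw [htot, hl, R1 hR] at h3
          exfalso
          have eA : 2 ^ h = 2 * 2 ^ (h - 1) := by
            rw [← pow_succ']; congr 1; omega
          have eB : 2 ^ (h + 1) = 2 * 2 ^ h := by rw [pow_succ]; ring
          have e0 : 0 < 2 ^ (h - 1) := Nat.pow_pos (by omega)
          omega

/-- an assignment is accepted by the balancing formula of
height `h` (the root does not evaluate to `F`) iff for every `0 < k ≤ h` and
`0 ≤ i < 2^{h-k}`, the number of `1`s in the `i`-th block of length `2^k` is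
`0`, `2^k` or `2^{k-1}`. -/
theorem balancing_accept_iff (h : ℕ) (a : ℕ → Bool) :
    balEval h a ≠ Sig4.F ↔
    ∀ k, 0 < k → k ≤ h → ∀ i, i < 2 ^ (h - k) →
      ones (2 ^ k) (fun j => a (i * 2 ^ k + j)) = 0 ∨
      ones (2 ^ k) (fun j => a (i * 2 ^ k + j)) = 2 ^ k ∨
      ones (2 ^ k) (fun j => a (i * 2 ^ k + j)) = 2 ^ (k - 1) := by
  exact (main h a).2.2.2
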